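/- A continuous function f : ℤ_p → ℤ_p with van der Put expansion f(x) = Σ_{m≥0} B_m χ(m,x) is 1-Lipschitz if and only if |B_m|_p ≤ p^{−⌊log_p m⌋} for all m ≥ 0 (with the convention ⌊log_p 0⌋ = 0). -/

import Mathlib

open MeasureTheory Finset

namespace VDP

noncomputable instance (p : ℕ) [Fact p.Prime] : MeasurableSpace ℤ_[p] := borel _
instance (p : ℕ) [Fact p.Prime] : BorelSpace ℤ_[p] := ⟨rfl⟩

/-- The Haar probability measure on `ℤ_[p]`. -/
noncomputable def haarZp (p : ℕ) [Fact p.Prime] : Measure ℤ_[p] :=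
  Measure.addHaarMeasure ⊤

/-- `f` is 1-Lipschitz. -/
def IsLip (p : ℕ) [Fact p.Prime] (f : ℤ_[p] → ℤ_[p]) : Prop :=
  ∀ x y : ℤ_[p], ‖f x - f y‖ ≤ ‖x - y‖

/-- The van der Put basis function `χ(m, x)` on `ℤ_[p]` (with `⌊log_p 0⌋ = 0`). -/
noncomputable def chi (p : ℕ) [Fact p.Prime] (m : ℕ) (x : ℤ_[p]) : ℤ_[p] :=
  if ‖x - (m : ℤ_[p])‖ ≤ ((p : ℝ) ^ (Nat.log p m + 1))⁻¹ then 1 else 0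

/-- `q(m) = m_s p^s`, the leading term of the `p`-adic expansion of `m`. -/
def q (p m : ℕ) : ℕ := m / p ^ Nat.log p m * p ^ Nat.log p m

/-- `f` has van der Put expansion with coefficients `B`. -/
def vdpExpansion (p : ℕ) [Fact p.Prime] (f : ℤ_[p] → ℤ_[p]) (B : ℕ → ℤ_[p]) : Prop :=
  ∀ x, f x = ∑' m, B m * chi p m x

/-- `f` is bijective modulo `p^n`. -/
def BijModPow (p : ℕ) [Fact p.Prime] (f : ℤ_[p] → ℤ_[p]) (n : ℕ) : Prop :=
  Function.Bijective fun a : ZMod (p ^ n) => PadicInt.toZModPow n (f ((a.val : ℕ) : ℤ_[p]))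

/-- `f` is transitive modulo `p^n`. -/
def TransModPow (p : ℕ) [Fact p.Prime] (f : ℤ_[p] → ℤ_[p]) (n : ℕ) : Prop :=
  ∀ x : ℤ_[p], ∀ a : ZMod (p ^ n), ∃ k : ℕ, PadicInt.toZModPow n (f^[k] x) = a

/-- The `i`-th digit of the canonical `p`-adic expansion of `x`. -/
noncomputable def digit (p : ℕ) [Fact p.Prime] (x : ℤ_[p]) (i : ℕ) : ℕ :=
  x.appr (i + 1) / p ^ i % p

end VDP


section Aux
open VDP Finset Filter
variable {p : ℕ} [Fact p.Prime]

lemma VDPaux.hp1 (p : ℕ) [Fact p.Prime] : 1 < p := (Fact.out : p.Prime).one_lt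

lemma VDPaux.chi_nat_cast (k m : ℕ) :
    chi p k (m : ℤ_[p]) =
      if ((p : ℤ) ^ (Nat.log p k + 1)) ∣ ((m : ℤ) - k) then 1 else 0 := by
  unfold chi
  refine if_congr ?_ rfl rfl
  have h1 : ((m : ℤ_[p]) - (k : ℤ_[p])) = (((m : ℤ) - (k : ℤ) : ℤ) : ℤ_[p]) := by push_cast; ring
  rw [h1]
  rw [show ((p : ℝ) ^ (Nat.log p k + 1))⁻¹ = (p : ℝ) ^ (-((Nat.log p k + 1 : ℕ) : ℤ)) by
    rw [zpow_neg, zpow_natCast]]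
  exact PadicInt.norm_int_le_pow_iff_dvd

lemma VDPaux.chi_zero_of_gt {k m : ℕ} (h : m < k) : chi p k (m : ℤ_[p]) = 0 := by
  rw [VDPaux.chi_nat_cast, if_neg]
  intro hd
  have hd' : ((p : ℤ) ^ (Nat.log p k + 1)) ∣ ((k : ℤ) - m) := by
    have := dvd_neg.2 hd
    simpa [neg_sub] using this
  have hpos : (0 : ℤ) < (k : ℤ) - m := by
    have : (m:ℤ) < k := by exact_mod_cast h
    omega
  have hle := Int.le_of_dvd hpos hd'
  have hk : (k : ℤ) < (p : ℤ) ^ (Nat.log p k + 1) := by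
    exact_mod_cast Nat.lt_pow_succ_log_self (VDPaux.hp1 p) k
  have : (0:ℤ) ≤ (m:ℤ) := Int.natCast_nonneg m
  omega

lemma VDPaux.chi_self (m : ℕ) : chi p m ((m : ℕ) : ℤ_[p]) = 1 := by
  rw [VDPaux.chi_nat_cast, if_pos (by simp)]

lemma VDPaux.norm_chi_le (m : ℕ) (x : ℤ_[p]) : ‖chi p m x‖ ≤ 1 := by
  unfold chi; split <;> simp

lemma VDPaux.key_sum (f : ℤ_[p] → ℤ_[p]) (B : ℕ → ℤ_[p]) (hB : vdpExpansion p f B)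
    (a N : ℕ) (hN : a < N) :
    f (a : ℤ_[p]) = ∑ k ∈ Finset.range N, B k * chi p k (a : ℤ_[p]) := by
  rw [hB]
  refine tsum_eq_sum ?_
  intro k hk
  have hNk : N ≤ k := le_of_not_gt (fun h => hk (Finset.mem_range.2 h))
  rw [VDPaux.chi_zero_of_gt (by omega : a < k), mul_zero]

lemma VDPaux.chi_eq_of_close {m : ℕ} {x y : ℤ_[p]}
    (h : ‖x - y‖ ≤ ((p : ℝ) ^ (Nat.log p m + 1))⁻¹) : chi p m x = chi p m y := by
  unfold chi
  refine if_congr ⟨fun h2 => ?_, fun h2 => ?_⟩ rfl rfl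
  · calc ‖y - (m : ℤ_[p])‖ = ‖(y - x) + (x - (m : ℤ_[p]))‖ := by rw [sub_add_sub_cancel]
      _ ≤ max ‖y - x‖ ‖x - (m : ℤ_[p])‖ := IsUltrametricDist.norm_add_le_max _ _
      _ ≤ _ := max_le (by rwa [norm_sub_rev]) h2
  · calc ‖x - (m : ℤ_[p])‖ = ‖(x - y) + (y - (m : ℤ_[p]))‖ := by rw [sub_add_sub_cancel]
      _ ≤ max ‖x - y‖ ‖y - (m : ℤ_[p])‖ := IsUltrametricDist.norm_add_le_max _ _
      _ ≤ _ := max_le h h2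

end Aux

open VDP in
theorem stmt4 (p : ℕ) [Fact p.Prime] (f : ℤ_[p] → ℤ_[p]) (B : ℕ → ℤ_[p])
    (hc : Continuous f) (hB : vdpExpansion p f B) :
    IsLip p f ↔ ∀ m : ℕ, ‖B m‖ ≤ ((p : ℝ) ^ Nat.log p m)⁻¹ := by
  have hp1 : 1 < p := VDPaux.hp1 p
  have hp0 : (0:ℝ) < p := by positivity
  constructor
  · -- Lipschitz implies coefficient bound
    intro hl m
    by_cases hm : m < p
    · rw [Nat.log_eq_zero_iff.2 (Or.inl hm)]
      simpa using PadicInt.norm_le_one (B m)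
    · push_neg at hm
      set s := Nat.log p m with hs
      have hs1 : 1 ≤ s := Nat.log_pos hp1 hm
      set mm := m % p ^ s with hmmdef
      have hps : 0 < p ^ s := pow_pos (by omega) s
      have hmmlt : mm < p ^ s := Nat.mod_lt _ hps
      have hpsm : p ^ s ≤ m := Nat.pow_log_le_self p (by omega)
      have hmmle : mm < m := lt_of_lt_of_le hmmlt hpsm
      have hdm := Nat.div_add_mod m (p ^ s)
      have hsub : m - mm = p ^ s * (m / p ^ s) := by omega
      have hdlt : m / p ^ s < p := by
        have : m < p ^ (s + 1) := Nat.lt_pow_succ_log_self hp1 m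
        rw [pow_succ] at this
        exact Nat.div_lt_of_lt_mul this
      have hdpos : 0 < m / p ^ s := Nat.div_pos hpsm hps
      have hdvd : ((p:ℤ) ^ s) ∣ ((m : ℤ) - mm) := by
        have h1 : (m : ℤ) - mm = ((m - mm : ℕ) : ℤ) := by
          push_cast [Nat.cast_sub hmmle.le]; ring
        rw [h1, hsub]
        push_cast
        exact Dvd.intro _ rfl
      have hfm := VDPaux.key_sum f B hB m (m + 1) (by omega)
      have hfmm := VDPaux.key_sum f B hB mm (m + 1) (by omega)
      have hBm : B m = f (m : ℤ_[p]) - f (mm : ℤ_[p]) := by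
        rw [hfm, hfmm, ← Finset.sum_sub_distrib]
        rw [Finset.sum_eq_single m]
        · have hzero : chi p m ((mm : ℕ) : ℤ_[p]) = 0 := by
            rw [VDPaux.chi_nat_cast, if_neg]
            intro hd
            have hd' : (p : ℕ) ^ (s + 1) ∣ (m - mm : ℕ) := by
              have h1 : (mm : ℤ) - m = -(((m - mm : ℕ) : ℤ)) := by
                push_cast [Nat.cast_sub hmmle.le]; ring
              rw [← hs, h1, dvd_neg] at hd
              exact_mod_cast hd
            rw [hsub, pow_succ, mul_comm ((p:ℕ)^s) p] at hd'
            have hpd : p ∣ m / p ^ s := by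
              rcases hd' with ⟨c, hc⟩
              have hc2 : p ^ s * (m / p ^ s) = p ^ s * (p * c) := by rw [hc]; ring
              exact ⟨c, Nat.eq_of_mul_eq_mul_left hps hc2⟩
            have := Nat.le_of_dvd hdpos hpd
            omega
          rw [VDPaux.chi_self, hzero]; ring
        · intro k hk hkm
          have hklt : k < m := by
            have := Finset.mem_range.1 hk; omega
          have hchieq : chi p k ((m : ℕ) : ℤ_[p]) = chi p k ((mm : ℕ) : ℤ_[p]) := by
            rw [VDPaux.chi_nat_cast, VDPaux.chi_nat_cast]
            set j := Nat.log p k + 1 with hj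
            by_cases hjs : j ≤ s
            · have hjd : ((p:ℤ) ^ j) ∣ ((m : ℤ) - mm) :=
                (pow_dvd_pow (p:ℤ) hjs).trans hdvd
              refine if_congr ⟨fun hd => ?_, fun hd => ?_⟩ rfl rfl
              · have := dvd_sub hd hjd
                simpa using this
              · have := dvd_add hd hjd
                have h2 : ((mm:ℤ) - k) + ((m:ℤ) - mm) = (m:ℤ) - k := by ring
                rwa [h2] at this
            · push_neg at hjs
              have hsk : s ≤ Nat.log p k := by omega
              have hk0 : k ≠ 0 := by
                intro h0
                rw [h0] at hsk
                simp [Nat.log_zero_right] at hsk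
                omega
              have hkps : p ^ s ≤ k :=
                le_trans (Nat.pow_le_pow_right (by omega) hsk) (Nat.pow_log_le_self p hk0)
              have hkj : (k : ℤ) < (p : ℤ) ^ j := by
                exact_mod_cast Nat.lt_pow_succ_log_self hp1 k
              have hmj : (m : ℤ) < (p : ℤ) ^ j := by
                have h1 : m < p ^ (s + 1) := Nat.lt_pow_succ_log_self hp1 m
                have h2 : (p:ℕ) ^ (s+1) ≤ p ^ j := Nat.pow_le_pow_right (by omega) (by omega)
                exact_mod_cast lt_of_lt_of_le h1 h2
              rw [if_neg, if_neg]
              · intro hd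
                have hd' : ((p : ℤ) ^ j) ∣ ((k : ℤ) - mm) := by
                  have := dvd_neg.2 hd; simpa [neg_sub] using this
                have hpos : (0:ℤ) < (k:ℤ) - mm := by
                  have : (mm:ℤ) < (p:ℤ)^s := by exact_mod_cast hmmlt
                  have : ((p:ℕ)^s : ℤ) ≤ k := by exact_mod_cast hkps
                  omega
                have := Int.le_of_dvd hpos hd'
                have : (0:ℤ) ≤ (mm:ℤ) := Int.natCast_nonneg mm
                omega
              · intro hd
                have hpos : (0:ℤ) < (m:ℤ) - k := by
                  have : (k:ℤ) < m := by exact_mod_cast hklt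
                  omega
                have := Int.le_of_dvd hpos hd
                have : (0:ℤ) ≤ (k:ℤ) := Int.natCast_nonneg k
                omega
          simp [hchieq]
        · intro h
          exact absurd (Finset.self_mem_range_succ m) h
      have hnorm : ‖(m : ℤ_[p]) - (mm : ℤ_[p])‖ ≤ ((p : ℝ) ^ s)⁻¹ := by
        have h1 : ((m : ℤ_[p]) - (mm : ℤ_[p])) = (((m : ℤ) - (mm : ℤ) : ℤ) : ℤ_[p]) := by
          push_cast; ring
        rw [h1, show ((p : ℝ) ^ s)⁻¹ = (p : ℝ) ^ (-(s : ℤ)) by rw [zpow_neg, zpow_natCast]]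
        exact PadicInt.norm_int_le_pow_iff_dvd.2 hdvd
      calc ‖B m‖ = ‖f (m : ℤ_[p]) - f (mm : ℤ_[p])‖ := by rw [hBm]
        _ ≤ ‖(m : ℤ_[p]) - (mm : ℤ_[p])‖ := hl _ _
        _ ≤ ((p : ℝ) ^ s)⁻¹ := hnorm
  · -- coefficient bound implies Lipschitz
    intro hb x y
    by_cases hxy : x = y
    · simp [hxy]
    have hlog : Filter.Tendsto (Nat.log p) Filter.atTop Filter.atTop := by
      refine Filter.tendsto_atTop_atTop.2 fun b => ⟨p ^ b + 1, fun a ha => ?_⟩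
      exact (Nat.le_log_iff_pow_le hp1 (by omega)).2 (by omega)
    have hbound : Filter.Tendsto (fun m : ℕ => ((p : ℝ) ^ Nat.log p m)⁻¹)
        Filter.atTop (nhds 0) :=
      (tendsto_inv_atTop_zero.comp
        ((tendsto_pow_atTop_atTop_of_one_lt (by exact_mod_cast hp1)).comp hlog))
    have hsum : ∀ z : ℤ_[p], Summable (fun m => B m * chi p m z) := by
      intro z
      apply NonarchimedeanAddGroup.summable_of_tendsto_cofinite_zero
      rw [Nat.cofinite_eq_atTop]
      refine squeeze_zero_norm (fun m => ?_) hbound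
      calc ‖B m * chi p m z‖ ≤ ‖B m‖ * ‖chi p m z‖ := norm_mul_le _ _
        _ ≤ ((p : ℝ) ^ Nat.log p m)⁻¹ * 1 :=
            mul_le_mul (hb m) (VDPaux.norm_chi_le m z) (norm_nonneg _) (by positivity)
        _ = _ := mul_one _
    have hne : x - y ≠ 0 := sub_ne_zero.2 hxy
    set n : ℕ := (x - y).valuation with hn
    have hval : ((n : ℤ)) = (x - y).valuation :=
      rfl
    have hnorm : ‖x - y‖ = ((p : ℝ) ^ n)⁻¹ := by
      rw [PadicInt.norm_eq_zpow_neg_valuation hne, ← hval, zpow_neg, zpow_natCast]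
    have hdiff : f x - f y = ∑' m, (B m * chi p m x - B m * chi p m y) := by
      rw [hB x, hB y, Summable.tsum_sub (hsum x) (hsum y)]
    rw [hdiff]
    refine IsUltrametricDist.norm_tsum_le_of_forall_le_of_nonneg (norm_nonneg _) fun m => ?_
    by_cases hcase : Nat.log p m + 1 ≤ n
    · have hchieq : chi p m x = chi p m y := by
        refine VDPaux.chi_eq_of_close (le_trans (le_of_eq hnorm) ?_)
        apply inv_anti₀ (by positivity)
        exact pow_le_pow_right₀ (by exact_mod_cast hp1.le) hcase
      rw [hchieq, sub_self, norm_zero]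
      exact norm_nonneg _
    · push_neg at hcase
      have hnlog : n ≤ Nat.log p m := by omega
      calc ‖B m * chi p m x - B m * chi p m y‖
          = ‖B m * (chi p m x - chi p m y)‖ := by rw [mul_sub]
        _ ≤ ‖B m‖ * ‖chi p m x - chi p m y‖ := norm_mul_le _ _
        _ ≤ ((p : ℝ) ^ Nat.log p m)⁻¹ * 1 := by
            refine mul_le_mul (hb m) ?_ (norm_nonneg _) (by positivity)
            have h1 : chi p m x - chi p m y = chi p m x + (-(chi p m y)) := by ring
            rw [h1]
            refine le_trans (IsUltrametricDist.norm_add_le_max _ _) (max_le (VDPaux.norm_chi_le m x) ?_)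
            rw [norm_neg]; exact VDPaux.norm_chi_le m y
        _ = ((p : ℝ) ^ Nat.log p m)⁻¹ := mul_one _
        _ ≤ ((p : ℝ) ^ n)⁻¹ := by
            apply inv_anti₀ (by positivity)
            exact pow_le_pow_right₀ (by exact_mod_cast hp1.le) hnlog
        _ = ‖x - y‖ := hnorm.symm
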